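/- Suppose (Q, X) is perfect and eutactic, where X is a nonempty finite subset of the minimal vectors of Q on Z, and 𝔭 ≠ {0} is a finite-dimensional subspace of Q-selfadjoint endomorphisms. Then there exists δ > 0 such that for every H ∈ 𝔭 ∖ {0}, min_{x ∈ X} Q(x, Hx) < −δ·‖H‖_Q. -/

import Mathlib

/-- The `Q`-operator norm `‖H‖_Q = (sup_{x ≠ 0} Q(Hx)/Q(x))^{1/2}`. -/
noncomputable def qNorm {V : Type*} [AddCommGroup V] [Module ℝ V]
    (Q : V →ₗ[ℝ] V →ₗ[ℝ] ℝ) (H : Module.End ℝ V) : ℝ :=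
  Real.sqrt (⨆ x : {x : V // x ≠ 0}, Q (H x.1) (H x.1) / Q x.1 x.1)

set_option maxHeartbeats 2000000 in
/-- Auxiliary compactness lemma: if every nonzero `H ∈ 𝔭` has some `x ∈ X` with
`Q x (H x) < 0`, then this holds uniformly, with a bound proportional to `qNorm Q H`. -/
theorem aux_uniform {V : Type*} [NormedAddCommGroup V] [InnerProductSpace ℝ V]
    [FiniteDimensional ℝ V] [Nontrivial V]
    (Q : V →ₗ[ℝ] V →ₗ[ℝ] ℝ) (hQ : ∀ x y : V, Q x y = inner ℝ x y)
    (X : Finset V) (hXne : X.Nonempty)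
    (𝔭 : Submodule ℝ (Module.End ℝ V)) (h𝔭 : 𝔭 ≠ ⊥)
    (hneg : ∀ H ∈ 𝔭, H ≠ 0 → ∃ x ∈ X, Q x (H x) < 0) :
    ∃ δ > (0 : ℝ), ∀ H ∈ 𝔭, H ≠ 0 → ∃ x ∈ X, Q x (H x) < -δ * qNorm Q H := by
  classical
  have hQnorm : ∀ x : V, Q x x = ‖x‖ ^ 2 := fun x => by
    rw [hQ]; exact real_inner_self_eq_norm_sq x
  have hpos : ∀ x : V, x ≠ 0 → 0 < Q x x := fun x hx => by
    rw [hQnorm]; exact pow_pos (norm_pos_iff.mpr hx) 2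
  set e : (Module.End ℝ V) ≃ₗ[ℝ] (V →L[ℝ] V) := LinearMap.toContinuousLinearMap with he
  have heapp : ∀ (H : Module.End ℝ V) (x : V), (e H) x = H x := fun H x => rfl
  haveI : FiniteDimensional ℝ (V →L[ℝ] V) := e.finiteDimensional
  haveI : Nonempty {x : V // x ≠ 0} := by
    obtain ⟨x, hx⟩ := exists_ne (0 : V)
    exact ⟨⟨x, hx⟩⟩
  -- qNorm is bounded by the operator norm
  have hqle : ∀ H : Module.End ℝ V, qNorm Q H ≤ ‖e H‖ := by
    intro H
    have hb : ∀ x : {x : V // x ≠ 0}, Q (H x.1) (H x.1) / Q x.1 x.1 ≤ ‖e H‖ ^ 2 := by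
      rintro ⟨x, hx⟩
      have hx2 : 0 < Q x x := hpos x hx
      rw [div_le_iff₀ hx2]
      have h1 : ‖(e H) x‖ ≤ ‖e H‖ * ‖x‖ := (e H).le_opNorm x
      have h2 : Q (H x) (H x) = ‖(e H) x‖ ^ 2 := by rw [heapp]; exact hQnorm _
      rw [h2, hQnorm x]
      nlinarith [norm_nonneg ((e H) x), norm_nonneg (e H), norm_nonneg x]
    have hsup : (⨆ x : {x : V // x ≠ 0}, Q (H x.1) (H x.1) / Q x.1 x.1) ≤ ‖e H‖ ^ 2 :=
      ciSup_le hb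
    calc qNorm Q H ≤ Real.sqrt (‖e H‖ ^ 2) := Real.sqrt_le_sqrt hsup
      _ = ‖e H‖ := Real.sqrt_sq (norm_nonneg _)
  -- The compact set S : unit sphere of the image of 𝔭
  set 𝔮 : Submodule ℝ (V →L[ℝ] V) := 𝔭.map (e : Module.End ℝ V →ₗ[ℝ] (V →L[ℝ] V)) with h𝔮
  set S : Set (V →L[ℝ] V) := (𝔮 : Set (V →L[ℝ] V)) ∩ Metric.sphere 0 1 with hS
  have hScl : IsClosed S := (Submodule.closed_of_finiteDimensional 𝔮).inter Metric.isClosed_sphere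
  have hSbd : Bornology.IsBounded S :=
    (Metric.isBounded_sphere).subset Set.inter_subset_right
  have hScomp : IsCompact S := Metric.isCompact_of_isClosed_isBounded hScl hSbd
  have hSne : S.Nonempty := by
    obtain ⟨H₀, hH₀, hH₀0⟩ := Submodule.exists_mem_ne_zero_of_ne_bot h𝔭
    have heH₀ : e H₀ ≠ 0 := fun h => hH₀0 (by simpa using e.injective (by simpa using h))
    have ht : ‖e H₀‖ ≠ 0 := norm_ne_zero_iff.2 heH₀
    refine ⟨‖e H₀‖⁻¹ • e H₀, Submodule.smul_mem _ _ ⟨H₀, hH₀, rfl⟩, ?_⟩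
    have hns : ‖‖e H₀‖⁻¹ • e H₀‖ = ‖‖e H₀‖⁻¹‖ * ‖e H₀‖ :=
      norm_smul (α := ℝ) (β := V →L[ℝ] V) ‖e H₀‖⁻¹ (e H₀)
    rw [mem_sphere_zero_iff_norm, hns, norm_inv, norm_norm, inv_mul_cancel₀ ht]
  -- The continuous function f
  set f : (V →L[ℝ] V) → ℝ := fun T => X.inf' hXne (fun x => Q x (T x)) with hf
  have hfc : Continuous f := by
    apply Continuous.finset_inf'_apply hXne
    intro x _
    have h1 : Continuous fun T : V →L[ℝ] V => T x :=
      (ContinuousLinearMap.apply ℝ V x).continuous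
    exact ((Q x).continuous_of_finiteDimensional).comp h1
  have hfneg : ∀ T ∈ S, f T < 0 := by
    rintro T ⟨hTq, hTs⟩
    obtain ⟨H, hH𝔭, rfl⟩ := hTq
    have hH0 : H ≠ 0 := by
      intro h
      rw [h] at hTs
      simp at hTs
    obtain ⟨x, hxX, hxlt⟩ := hneg H hH𝔭 hH0
    exact lt_of_le_of_lt (Finset.inf'_le _ hxX) hxlt
  obtain ⟨T₁, hT₁S, hT₁max⟩ := hScomp.exists_isMaxOn hSne hfc.continuousOn
  set m : ℝ := -(f T₁) with hm
  have hm0 : 0 < m := by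
    have := hfneg T₁ hT₁S
    linarith
  have hSle : ∀ T ∈ S, f T ≤ -m := by
    intro T hT
    have := hT₁max hT
    simpa [hm] using this
  refine ⟨m / 2, by linarith, ?_⟩
  intro H hH hH0
  have heH : e H ≠ 0 := fun h => hH0 (by simpa using e.injective (by simpa using h))
  set t : ℝ := ‖e H‖ with hts
  have ht : 0 < t := norm_pos_iff.2 heH
  have hTS : (t⁻¹ • e H) ∈ S := by
    refine ⟨Submodule.smul_mem _ _ ⟨H, hH, rfl⟩, ?_⟩
    have hns : ‖t⁻¹ • e H‖ = ‖t⁻¹‖ * ‖e H‖ :=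
      norm_smul (α := ℝ) (β := V →L[ℝ] V) t⁻¹ (e H)
    rw [mem_sphere_zero_iff_norm, hns, norm_inv, Real.norm_eq_abs, abs_of_pos ht, hts,
      inv_mul_cancel₀ ht.ne']
  obtain ⟨x₀, hx₀X, hx₀eq⟩ := X.exists_mem_eq_inf' hXne (fun x => Q x ((t⁻¹ • e H) x))
  have key : Q x₀ ((t⁻¹ • e H) x₀) ≤ -m := hx₀eq ▸ hSle _ hTS
  have hval : Q x₀ ((t⁻¹ • e H) x₀) = t⁻¹ * Q x₀ (H x₀) := by
    have h1 : (t⁻¹ • e H) x₀ = t⁻¹ • (H x₀) := rfl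
    rw [h1, map_smul, smul_eq_mul]
  rw [hval] at key
  have h1 : Q x₀ (H x₀) ≤ -(m * t) := by
    have h := mul_le_mul_of_nonneg_left key ht.le
    rw [← mul_assoc, mul_inv_cancel₀ ht.ne', one_mul] at h
    nlinarith
  have hq : qNorm Q H ≤ t := hqle H
  refine ⟨x₀, hx₀X, ?_⟩
  have h2 : (m / 2) * qNorm Q H ≤ (m / 2) * t :=
    mul_le_mul_of_nonneg_left hq (by linarith)
  nlinarith

set_option maxHeartbeats 1000000 in
/-- If `(Q, X)` is perfect and eutactic (`X` a nonempty finite subset of the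
minimal vectors of `Q` on `Z`, `𝔭 ≠ 0` a subspace of `Q`-selfadjoint
endomorphisms), then there is `δ > 0` with
`min_{x∈X} Q(x,Hx) < −δ·‖H‖_Q` for all nonzero `H ∈ 𝔭`. -/
theorem uniform_negativity_of_perfect_eutactic
    {V : Type*} [AddCommGroup V] [Module ℝ V] [FiniteDimensional ℝ V] [Nontrivial V]
    (Q : V →ₗ[ℝ] V →ₗ[ℝ] ℝ)
    (hsymm : ∀ x y, Q x y = Q y x) (hpos : ∀ x : V, x ≠ 0 → 0 < Q x x)
    (Z : Set V) (hZ0 : (0 : V) ∉ Z)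
    (X : Finset V) (hXne : X.Nonempty) (hXZ : ↑X ⊆ Z)
    (hXmin : ∀ x ∈ X, ∀ z ∈ Z, Q x x ≤ Q z z)
    (𝔭 : Submodule ℝ (Module.End ℝ V)) (h𝔭 : 𝔭 ≠ ⊥)
    (hsa : ∀ H ∈ 𝔭, ∀ x y, Q x (H y) = Q (H x) y)
    (hperfect : ∀ H ∈ 𝔭, ∀ c : ℝ, (∀ x ∈ X, Q x (H x) = c * Q x x) →
        H = c • (1 : Module.End ℝ V))
    (heutactic : ∀ H ∈ 𝔭, (∃ x ∈ X, 0 < Q x (H x)) → ∃ y ∈ X, Q y (H y) < 0) :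
    ∃ δ > (0 : ℝ), ∀ H ∈ 𝔭, H ≠ 0 → ∃ x ∈ X, Q x (H x) < -δ * qNorm Q H := by
  classical
  -- Pointwise negativity from perfection and eutaxy
  have hneg : ∀ H ∈ 𝔭, H ≠ 0 → ∃ x ∈ X, Q x (H x) < 0 := by
    intro H hH hH0
    by_contra hcon
    push_neg at hcon
    by_cases hex : ∃ x ∈ X, 0 < Q x (H x)
    · obtain ⟨y, hy, hy'⟩ := heutactic H hH hex
      exact absurd hy' (not_lt.2 (hcon y hy))
    · push_neg at hex
      have hz : ∀ x ∈ X, Q x (H x) = 0 * Q x x := by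
        intro x hx
        simpa using le_antisymm (hex x hx) (hcon x hx)
      have := hperfect H hH 0 hz
      simp only [zero_smul] at this
      exact hH0 this
  -- Inner product structure on V from Q
  letI core : InnerProductSpace.Core ℝ V :=
    { inner := fun x y => Q x y
      conj_inner_symm := fun x y => by simpa using hsymm y x
      re_inner_nonneg := fun x => by
        rcases eq_or_ne x 0 with h | h
        · simp [h]
        · exact le_of_lt (by simpa using hpos x h)
      add_left := fun x y z => by simp
      smul_left := fun x y r => by simp
      definite := fun x hx => by
        by_contra h
        exact (hpos x h).ne' (by simpa using hx) }
  letI : NormedAddCommGroup V := core.toNormedAddCommGroup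
  letI : InnerProductSpace ℝ V := InnerProductSpace.ofCore core.toCore
  exact aux_uniform Q (fun x y => rfl) X hXne 𝔭 h𝔭 hneg
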